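/- Let R be a commutative ring, N ≥ 1, and let σ, t and s_1,…,s_N be invertible elements of R. Define: u^{(k)} to be the family (σ t^{k−i})_{i=1,…,k}; v to be the family (s_i + s_i^{−1})_{i=1,…,N}; w^{(m)} to be the family (σ t^{N−i} + σ^{−1} t^{i−N})_{i=m,…,N}; d^{(k)}_j := σ^j t^{jk − j(j+1)/2} · ê_j(u^{(k)}); d_m := σ^m t^{mN − m(m+1)/2} · ê_m(s_1,…,s_N); and f_m := σ^m t^{mN − m(m+1)/2} · Σ_{j=0}^{m} (−1)^j e_{m−j}(v) h_j(w^{(m)}) for m ≥ 1, with f_0 := 1. Then for every 1 ≤ m ≤ N: d_m = Σ_{j=0}^{m} d^{(N−m+j)}_j · f_{m−j}. (This is the identity between the eigenvalues of the Koornwinder–Macdonald operators and those of van Diejen's operators, with s_i = σ t^{N−i} q^{λ_i}.) -/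

import Mathlib

open scoped BigOperators

noncomputable section

/-- The elementary symmetric polynomial `e_k` of the family `(u_i)_{i ∈ s}`. -/
def esym {R : Type*} [CommRing R] (k : ℕ) (s : Finset ℕ) (u : ℕ → R) : R :=
  ∑ S ∈ Finset.powersetCard k s, ∏ i ∈ S, u i

/-- The complete homogeneous symmetric polynomial `h_k` of the family `(u_i)_{i ∈ s}`. -/
def hsym {R : Type*} [CommRing R] (k : ℕ) (s : Finset ℕ) (u : ℕ → R) : R :=
  ∑ m ∈ s.sym k, ((m : Multiset ℕ).map u).prod

/-- The BC-type elementary symmetric function `ê_k` of a family of invertible elements: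
`ê_k = ∑_{S, T ⊆ s, |S| + |T| = k} (∏_{i∈S} z_i)(∏_{i∈T} z_i⁻¹)`. -/
def ehat {R : Type*} [CommRing R] (k : ℕ) (s : Finset ℕ) (z : ℕ → Rˣ) : R :=
  ∑ p ∈ (s.powerset ×ˢ s.powerset).filter (fun p => p.1.card + p.2.card = k),
    (∏ i ∈ p.1, (z i : R)) * ∏ i ∈ p.2, (((z i)⁻¹ : Rˣ) : R)

/-- `d^{(k)}_j = σ^j t^{jk - j(j+1)/2} ê_j(u^{(k)})` where `u^{(k)} = (σ t^{k-i})_{1≤i≤k}`. -/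
def dEigen0 {R : Type*} [CommRing R] (σ t : Rˣ) (k j : ℕ) : R :=
  ((σ ^ j * t ^ ((j : ℤ) * (k : ℤ) - ((j : ℤ) * ((j : ℤ) + 1)) / 2) : Rˣ) : R) *
    ehat j (Finset.Icc 1 k) (fun i => σ * t ^ ((k : ℤ) - (i : ℤ)))

/-- `d_m = σ^m t^{mN - m(m+1)/2} ê_m(s_1,…,s_N)`. -/
def dEigen {R : Type*} [CommRing R] (N : ℕ) (σ t : Rˣ) (s : ℕ → Rˣ) (m : ℕ) : R :=
  ((σ ^ m * t ^ ((m : ℤ) * (N : ℤ) - ((m : ℤ) * ((m : ℤ) + 1)) / 2) : Rˣ) : R) *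
    ehat m (Finset.Icc 1 N) s

/-- `f_m = σ^m t^{mN - m(m+1)/2} ∑_{j=0}^m (-1)^j e_{m-j}(v) h_j(w^{(m)})` for `m ≥ 1`,
with `f_0 = 1`, where `v = (s_i + s_i⁻¹)_{1≤i≤N}` and
`w^{(m)} = (σ t^{N-i} + σ⁻¹ t^{i-N})_{m≤i≤N}`. -/
def fEigen {R : Type*} [CommRing R] (N : ℕ) (σ t : Rˣ) (s : ℕ → Rˣ) (m : ℕ) : R :=
  if m = 0 then 1
  else
    ((σ ^ m * t ^ ((m : ℤ) * (N : ℤ) - ((m : ℤ) * ((m : ℤ) + 1)) / 2) : Rˣ) : R) *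
      ∑ j ∈ Finset.range (m + 1),
        (-1 : R) ^ j *
          esym (m - j) (Finset.Icc 1 N) (fun i => (s i : R) + (((s i)⁻¹ : Rˣ) : R)) *
          hsym j (Finset.Icc m N)
            (fun i => ((σ * t ^ ((N : ℤ) - (i : ℤ)) : Rˣ) : R) +
              ((σ⁻¹ * t ^ ((i : ℤ) - (N : ℤ)) : Rˣ) : R))


section Aux
open Polynomial Finset
variable {R : Type*} [CommRing R]


lemma esym_zero (s : Finset ℕ) (u : ℕ → R) : esym 0 s u = 1 := by simp [esym]

lemma esym_eq_zero (k : ℕ) (s : Finset ℕ) (u : ℕ → R) (h : s.card < k) : esym k s u = 0 := by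
  rw [esym, Finset.powersetCard_eq_empty.2 h, Finset.sum_empty]

lemma hsym_zero (s : Finset ℕ) (u : ℕ → R) : hsym 0 s u = 1 := by simp [hsym]; rfl

lemma hsym_empty (c : ℕ) (u : ℕ → R) : hsym (c+1) ∅ u = 0 := by simp [hsym]

lemma hsym_insert (c : ℕ) (a : ℕ) (s : Finset ℕ) (u : ℕ → R) (ha : a ∉ s) :
    hsym (c+1) (insert a s) u = hsym (c+1) s u + u a * hsym c (insert a s) u := by
  classical
  rw [hsym, add_comm (hsym (c+1) s u), ← Finset.sum_filter_add_sum_filter_not ((insert a s).sym (c+1)) (fun m => a ∈ m)]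
  congr 1
  · -- part with a ∈ m  : equals u a * hsym c (insert a s) u
    rw [hsym, Finset.mul_sum]
    refine Finset.sum_bij' (i := fun m hm => Sym.erase m a (Finset.mem_filter.1 hm).2)
      (j := fun m _ => Sym.cons a m) ?_ ?_ ?_ ?_ ?_
    · intro m hm
      rw [Finset.mem_filter] at hm
      rw [Finset.mem_sym_iff]
      intro b hb
      rw [← Sym.mem_coe, Sym.coe_erase] at hb
      exact Finset.mem_sym_iff.1 hm.1 b (Sym.mem_coe.1 (Multiset.mem_of_mem_erase hb))
    · intro m hm
      rw [Finset.mem_filter]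
      constructor
      · rw [Finset.mem_sym_iff]
        intro b hb
        rcases Sym.mem_cons.1 hb with rfl | hb
        · exact Finset.mem_insert_self _ _
        · exact Finset.mem_sym_iff.1 hm b hb
      · exact Sym.mem_cons_self a m
    · intro m hm
      exact Sym.cons_erase _
    · intro m hm
      exact Sym.erase_cons_head _ _
    · intro m hm
      have := Sym.cons_erase (Finset.mem_filter.1 hm).2
      conv_lhs => rw [← this]
      rw [Sym.coe_cons, Multiset.map_cons, Multiset.prod_cons]
  · -- part with a ∉ m : equals hsym (c+1) s u
    rw [hsym]
    refine Finset.sum_congr ?_ (fun _ _ => rfl)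
    ext m
    rw [Finset.mem_filter, Finset.mem_sym_iff, Finset.mem_sym_iff]
    constructor
    · rintro ⟨h1, h2⟩ b hb
      rcases Finset.mem_insert.1 (h1 b hb) with rfl | hbs
      · exact absurd hb h2
      · exact hbs
    · intro h
      refine ⟨fun b hb => Finset.mem_insert_of_mem (h b hb), fun hmem => ha (h a hmem)⟩


-- generic expansion : ∏ (1 + u i * X) as polynomial
lemma prod_linear (s : Finset ℕ) (u : ℕ → R) :
    ∏ i ∈ s, (1 + C (u i) * X) =
      ∑ k ∈ Finset.range (s.card + 1), C (esym k s u) * X ^ k := by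
  have h := Finset.prod_add (fun i => C (u i) * X) (fun _ => (1:R[X])) s
  simp only [add_comm (C _ * X) 1] at h ⊢
  rw [h]
  rw [Finset.sum_powerset]
  refine Finset.sum_congr rfl fun k _ => ?_
  simp only [esym, map_sum, Finset.sum_mul]
  refine Finset.sum_congr rfl fun T hT => ?_
  rw [Finset.mem_powersetCard] at hT
  rw [Finset.prod_const_one, mul_one, Finset.prod_mul_distrib, Finset.prod_const,
    hT.2, map_prod]

lemma prod_quadratic (s : Finset ℕ) (u : ℕ → R) :
    ∏ i ∈ s, (1 + C (u i) * X + X ^ 2) =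
      ∑ k ∈ Finset.range (s.card + 1),
        C (esym k s u) * X ^ k * (1 + X ^ 2) ^ (s.card - k) := by
  have h := Finset.prod_add (fun i => C (u i) * X) (fun _ => (1:R[X]) + X ^ 2) s
  have e1 : ∀ i ∈ s, (1 + C (u i) * X + X ^ 2) = (C (u i) * X + (1 + X ^ 2)) := by
    intro i _; ring
  rw [Finset.prod_congr rfl e1, h]
  rw [Finset.sum_powerset s fun T => (∏ i ∈ T, C (u i) * X) * ∏ _i ∈ s \ T, ((1:R[X]) + X ^ 2)]
  refine Finset.sum_congr rfl fun k hk => ?_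
  simp only [esym, map_sum, Finset.sum_mul]
  refine Finset.sum_congr rfl fun T hT => ?_
  rw [Finset.mem_powersetCard] at hT
  rw [Finset.prod_const, Finset.prod_mul_distrib, Finset.prod_const,
    Finset.card_sdiff_of_subset hT.1, hT.2, map_prod]


/-- `gg N v w q r = e_r(V - W_{≥q})` -/
def gg (N : ℕ) (v w : ℕ → R) (q r : ℕ) : R :=
  ∑ c ∈ Finset.range (r+1),
    (-1 : R)^c * esym (r-c) (Finset.Icc 1 N) v * hsym c (Finset.Icc q N) w

lemma Icc_eq_insert (q N : ℕ) (h : q ≤ N) :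
    Finset.Icc q N = insert q (Finset.Icc (q+1) N) := by
  ext i
  simp only [Finset.mem_Icc, Finset.mem_insert]
  omega

lemma not_mem_Icc_succ (q N : ℕ) : q ∉ Finset.Icc (q+1) N := by
  simp [Finset.mem_Icc]

lemma hsym_Icc (c q N : ℕ) (w : ℕ → R) (h : q ≤ N) :
    hsym (c+1) (Finset.Icc q N) w
      = hsym (c+1) (Finset.Icc (q+1) N) w + w q * hsym c (Finset.Icc q N) w := by
  rw [Icc_eq_insert q N h, hsym_insert c q _ w (not_mem_Icc_succ q N), ← Icc_eq_insert q N h]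

lemma gg_zero (N : ℕ) (v w : ℕ → R) (q : ℕ) : gg N v w q 0 = 1 := by
  simp [gg, esym_zero, hsym_zero]

lemma gg_top (N : ℕ) (v w : ℕ → R) (q r : ℕ) (h : N < q) :
    gg N v w q r = esym r (Finset.Icc 1 N) v := by
  have he : Finset.Icc q N = ∅ := by
    rw [Finset.Icc_eq_empty_iff]; omega
  rw [gg, Finset.sum_range_succ']
  simp [he, hsym_empty, hsym_zero]

lemma gg_rec (N q r : ℕ) (v w : ℕ → R) (hq : 1 ≤ q) (hqN : q ≤ N) :
    gg N v w q (r+1) = gg N v w (q+1) (r+1) - w q * gg N v w q r := by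
  simp only [gg]
  rw [Finset.sum_range_succ'
      (fun c => (-1 : R)^c * esym (r+1-c) (Finset.Icc 1 N) v * hsym c (Finset.Icc q N) w) (r+1),
    Finset.sum_range_succ'
      (fun c => (-1 : R)^c * esym (r+1-c) (Finset.Icc 1 N) v * hsym c (Finset.Icc (q+1) N) w) (r+1)]
  have step : ∀ c ∈ Finset.range (r+1),
      (-1 : R)^(c+1) * esym (r+1-(c+1)) (Finset.Icc 1 N) v * hsym (c+1) (Finset.Icc q N) w
        = (-1 : R)^(c+1) * esym (r+1-(c+1)) (Finset.Icc 1 N) v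
            * hsym (c+1) (Finset.Icc (q+1) N) w
          - w q * ((-1 : R)^c * esym (r-c) (Finset.Icc 1 N) v * hsym c (Finset.Icc q N) w) := by
    intro c _
    rw [hsym_Icc c q N w hqN]
    have : r + 1 - (c+1) = r - c := by omega
    rw [this]
    ring
  rw [Finset.sum_congr rfl step, Finset.sum_sub_distrib, ← Finset.mul_sum]
  rw [hsym_zero, hsym_zero]
  ring

/-- `AA N w q = ∏_{i=q+1}^{N} (1 + w_i X + X²)` -/
def AA (N : ℕ) (w : ℕ → R) (q : ℕ) : Polynomial R :=
  ∏ i ∈ Finset.Icc (q+1) N, (1 + C (w i) * X + X^2)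

lemma AA_top (N : ℕ) (w : ℕ → R) (q : ℕ) (h : N ≤ q) : AA N w q = 1 := by
  rw [AA, Finset.Icc_eq_empty_iff.2 (by omega), Finset.prod_empty]

lemma AA_rec (N : ℕ) (w : ℕ → R) (q : ℕ) (h : q < N) :
    AA N w q = (1 + C (w (q+1)) * X + X^2) * AA N w (q+1) := by
  rw [AA, AA, Icc_eq_insert (q+1) N (by omega), Finset.prod_insert (not_mem_Icc_succ _ _)]

/-- `SS N v w k = ∑_{r=0}^{N-k} X^r e_r(V - W_{≥ r+k}) A_{r+k}` -/
def SS (N : ℕ) (v w : ℕ → R) (k : ℕ) : Polynomial R :=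
  ∑ r ∈ Finset.range (N - k + 1), X^r * C (gg N v w (r+k) r) * AA N w (r+k)

lemma SS_rec (N : ℕ) (v w : ℕ → R) (k : ℕ) (hk : k < N) :
    SS N v w k = (1 + X^2) * SS N v w (k+1)
      + X^(N-k) * C (esym (N-k) (Finset.Icc 1 N) v) := by
  have hNk : N - k = (N - (k+1)) + 1 := by omega
  rw [SS]
  rw [Finset.sum_range_succ'
      (fun r => X^r * C (gg N v w (r+k) r) * AA N w (r+k)) (N-k)]
  have step : ∀ r ∈ Finset.range (N-k),
      X^(r+1) * C (gg N v w (r+1+k) (r+1)) * AA N w (r+1+k)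
        = X^(r+1) * C (gg N v w (r+k+2) (r+1)) * AA N w (r+k+1)
          - X^(r+1) * C (w (r+k+1)) * C (gg N v w (r+k+1) r) * AA N w (r+k+1) := by
    intro r hr
    rw [Finset.mem_range] at hr
    have h1 : r + 1 + k = r + k + 1 := by omega
    rw [h1, gg_rec N (r+k+1) r v w (by omega) (by omega)]
    rw [map_sub, map_mul]
    ring
  rw [Finset.sum_congr rfl step, Finset.sum_sub_distrib]
  -- first sum + T0 = ∑_{r ∈ range (N-k+1)} U r  where U r = X^r C(gg (r+k+1) r) AA (r+k)
  have hU : (∑ r ∈ Finset.range (N-k),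
        X^(r+1) * C (gg N v w (r+k+2) (r+1)) * AA N w (r+k+1))
        + X^0 * C (gg N v w (0+k) 0) * AA N w (0+k)
      = ∑ r ∈ Finset.range (N-k+1), X^r * C (gg N v w (r+k+1) r) * AA N w (r+k) := by
    rw [Finset.sum_range_succ'
      (fun r => X^r * C (gg N v w (r+k+1) r) * AA N w (r+k)) (N-k)]
    rw [gg_zero, gg_zero]
    refine congrArg₂ _ (Finset.sum_congr rfl fun r _ => ?_) rfl
    have h1 : r + 1 + k + 1 = r + k + 2 := by omega
    have h2 : r + 1 + k = r + k + 1 := by omega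
    rw [h1, h2]
  -- rearrange: (A - B) + T0 = (A + T0) - B
  rw [sub_add_eq_add_sub, hU]
  -- peel top term of U-sum
  rw [Finset.sum_range_succ
      (fun r => X^r * C (gg N v w (r+k+1) r) * AA N w (r+k)) (N-k)]
  have htop : X^(N-k) * C (gg N v w (N-k+k+1) (N-k)) * AA N w (N-k+k)
      = X^(N-k) * C (esym (N-k) (Finset.Icc 1 N) v) := by
    have h1 : N - k + k = N := by omega
    rw [h1, gg_top N v w (N+1) (N-k) (by omega), AA_top N w N le_rfl, mul_one]
  rw [htop]
  -- now combine the two range (N-k) sums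
  have hcomb : (∑ r ∈ Finset.range (N-k), X^r * C (gg N v w (r+k+1) r) * AA N w (r+k))
      - (∑ r ∈ Finset.range (N-k),
          X^(r+1) * C (w (r+k+1)) * C (gg N v w (r+k+1) r) * AA N w (r+k+1))
      = (1 + X^2) * SS N v w (k+1) := by
    rw [SS, ← hNk, Finset.mul_sum, ← Finset.sum_sub_distrib]
    refine Finset.sum_congr rfl fun r hr => ?_
    rw [Finset.mem_range] at hr
    have h1 : r + (k+1) = r + k + 1 := by omega
    rw [h1, AA_rec N w (r+k) (by omega)]
    ring
  rw [add_sub_right_comm, hcomb]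

lemma SS_closed (N : ℕ) (v w : ℕ → R) :
    ∀ d, d ≤ N → SS N v w (N-d)
      = ∑ i ∈ Finset.range (d+1),
          X^(d-i) * C (esym (d-i) (Finset.Icc 1 N) v) * (1+X^2)^i := by
  intro d
  induction d with
  | zero =>
    intro _
    rw [SS]
    have h0 : N - (N - 0) = 0 := by omega
    rw [h0]
    rw [Finset.sum_range_one, Finset.sum_range_one]
    have h1 : 0 + (N - 0) = N := by omega
    rw [h1, gg_zero, AA_top N w N le_rfl, esym_zero]
    simp
  | succ d ih =>
    intro hd
    have hk : N - (d+1) < N := by omega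
    rw [SS_rec N v w (N-(d+1)) hk]
    have h1 : N - (d+1) + 1 = N - d := by omega
    have h2 : N - (N - (d+1)) = d + 1 := by omega
    rw [h1, h2, ih (by omega)]
    rw [Finset.sum_range_succ'
      (fun i => X^(d+1-i) * C (esym (d+1-i) (Finset.Icc 1 N) v) * (1+X^2)^i) (d+1)]
    rw [Finset.mul_sum]
    have h3 : d + 1 - 0 = d + 1 := rfl
    rw [h3, pow_zero, mul_one]
    congr 1
    refine Finset.sum_congr rfl fun i _ => ?_
    have h4 : d + 1 - (i+1) = d - i := by omega
    rw [h4]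
    ring

lemma star (N : ℕ) (v w : ℕ → R) :
    ∏ i ∈ Finset.Icc 1 N, (1 + C (v i) * X + X^2) = SS N v w 0 := by
  have hc : (Finset.Icc 1 N).card = N := by
    rw [Nat.card_Icc]; omega
  rw [prod_quadratic, hc]
  have h0 : (0:ℕ) = N - N := by omega
  rw [h0, SS_closed N v w N le_rfl]
  rw [← Finset.sum_range_reflect
    (fun i => X^(N-i) * C (esym (N-i) (Finset.Icc 1 N) v) * (1+X^2)^i) (N+1)]
  refine Finset.sum_congr rfl fun k hk => ?_
  rw [Finset.mem_range] at hk
  have h1 : N + 1 - 1 - k = N - k := by omega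
  have h2 : N - (N - k) = k := by omega
  rw [h1, h2]
  ring

lemma coeff_sum_pow (n : ℕ) (f : ℕ → R) (a : ℕ) :
    (∑ k ∈ Finset.range (n+1), C (f k) * X ^ k).coeff a
      = if a ≤ n then f a else 0 := by
  rw [Polynomial.finset_sum_coeff]
  have : ∀ k ∈ Finset.range (n+1), (C (f k) * X ^ k).coeff a
      = if k = a then f k else 0 := by
    intro k _
    rw [Polynomial.coeff_C_mul, Polynomial.coeff_X_pow]
    by_cases h : a = k <;> simp [h, eq_comm]
  rw [Finset.sum_congr rfl this, Finset.sum_ite_eq' (Finset.range (n+1)) a f]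
  simp only [Finset.mem_range]
  by_cases h : a ≤ n <;> simp [h, Nat.lt_succ_iff]

lemma coeff_prod_linear (s : Finset ℕ) (u : ℕ → R) (a : ℕ) :
    (∏ i ∈ s, (1 + C (u i) * X)).coeff a = esym a s u := by
  rw [prod_linear, coeff_sum_pow]
  by_cases h : a ≤ s.card
  · simp [h]
  · rw [if_neg h, esym_eq_zero a s u (by omega)]

lemma ehat_eq_sum (k : ℕ) (s : Finset ℕ) (z : ℕ → Rˣ) :
    ehat k s z = ∑ ab ∈ Finset.HasAntidiagonal.antidiagonal k,
      esym ab.1 s (fun i => (z i : R)) * esym ab.2 s (fun i => (((z i)⁻¹ : Rˣ) : R)) := by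
  classical
  rw [ehat]
  have hset : (s.powerset ×ˢ s.powerset).filter (fun p => p.1.card + p.2.card = k)
      = (Finset.HasAntidiagonal.antidiagonal k).biUnion
          (fun ab => Finset.powersetCard ab.1 s ×ˢ Finset.powersetCard ab.2 s) := by
    ext p
    simp only [Finset.mem_filter, Finset.mem_product, Finset.mem_powerset,
      Finset.mem_biUnion, Finset.HasAntidiagonal.mem_antidiagonal, Finset.mem_powersetCard]
    constructor
    · rintro ⟨⟨h1, h2⟩, h3⟩
      exact ⟨(p.1.card, p.2.card), h3, ⟨h1, rfl⟩, ⟨h2, rfl⟩⟩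
    · rintro ⟨ab, hab, ⟨h1, h1'⟩, ⟨h2, h2'⟩⟩
      exact ⟨⟨h1, h2⟩, by omega⟩
  rw [hset, Finset.sum_biUnion]
  · refine Finset.sum_congr rfl fun ab _ => ?_
    rw [Finset.sum_product, esym, esym, Finset.sum_mul]
    refine Finset.sum_congr rfl fun S _ => ?_
    rw [Finset.mul_sum]
  · intro ab _ cd _ hne
    refine Finset.disjoint_left.2 fun p hp hp' => hne ?_
    rw [Finset.mem_product, Finset.mem_powersetCard, Finset.mem_powersetCard] at hp hp'
    ext
    · rw [← hp.1.2, hp'.1.2]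
    · rw [← hp.2.2, hp'.2.2]

lemma quad_factor (a b : R) (h : a * b = 1) :
    (1 : R[X]) + C (a + b) * X + X^2 = (1 + C a * X) * (1 + C b * X) := by
  have : (1 + C a * X) * (1 + C b * X) = 1 + (C a + C b) * X + (C a * C b) * X^2 := by ring
  rw [this, ← map_add, ← map_mul, h, map_one, one_mul]

lemma coeff_quadprod (s : Finset ℕ) (z : ℕ → Rˣ) (k : ℕ) :
    (∏ i ∈ s, ((1:R[X]) + C ((z i : R) + (((z i)⁻¹ : Rˣ) : R)) * X + X^2)).coeff k
      = ehat k s z := by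
  have hfac : ∀ i ∈ s, ((1:R[X]) + C ((z i : R) + (((z i)⁻¹ : Rˣ) : R)) * X + X^2)
      = (1 + C (z i : R) * X) * (1 + C (((z i)⁻¹ : Rˣ) : R) * X) := by
    intro i _
    refine quad_factor _ _ ?_
    rw [← Units.val_mul, mul_inv_cancel, Units.val_one]
  rw [Finset.prod_congr rfl hfac, Finset.prod_mul_distrib, Polynomial.coeff_mul,
    ehat_eq_sum]
  refine Finset.sum_congr rfl fun ab _ => ?_
  rw [coeff_prod_linear, coeff_prod_linear]

lemma coeff_SS (N : ℕ) (v w : ℕ → R) (m : ℕ) (hm : m ≤ N) :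
    (SS N v w 0).coeff m
      = ∑ r ∈ Finset.range (m+1), gg N v w r r * (AA N w r).coeff (m - r) := by
  rw [SS, Polynomial.finset_sum_coeff]
  simp only [Nat.sub_zero, Nat.add_zero]
  have hterm : ∀ r ∈ Finset.range (N+1),
      (X^r * C (gg N v w r r) * AA N w r).coeff m
        = if r ≤ m then gg N v w r r * (AA N w r).coeff (m - r) else 0 := by
    intro r _
    have h1 : X^r * C (gg N v w r r) * AA N w r
        = (C (gg N v w r r) * AA N w r) * X^r := by ring
    rw [h1, Polynomial.coeff_mul_X_pow', Polynomial.coeff_C_mul]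
  rw [Finset.sum_congr rfl hterm]
  rw [← Finset.sum_subset (Finset.range_subset_range.2 (by omega) :
      Finset.range (m+1) ⊆ Finset.range (N+1))]
  · refine Finset.sum_congr rfl fun r hr => ?_
    rw [Finset.mem_range] at hr
    rw [if_pos (by omega)]
  · intro r _ hr
    rw [Finset.mem_range, not_lt] at hr
    rw [if_neg (by omega)]

lemma ehat_shift (σ t : Rˣ) (N r j : ℕ) (hr : r ≤ N) :
    ehat j (Finset.Icc 1 (N-r)) (fun i => σ * t ^ ((((N-r) : ℕ) : ℤ) - (i:ℤ)))
      = ehat j (Finset.Icc (r+1) N) (fun i => σ * t ^ ((N:ℤ) - (i:ℤ))) := by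
  rw [← coeff_quadprod (Finset.Icc 1 (N-r)) (fun i => σ * t ^ ((((N-r) : ℕ) : ℤ) - (i:ℤ))) j,
    ← coeff_quadprod (Finset.Icc (r+1) N) (fun i => σ * t ^ ((N:ℤ) - (i:ℤ))) j]
  congr 1
  have hmap : Finset.Icc (r+1) N = (Finset.Icc 1 (N-r)).map (addRightEmbedding r) := by
    rw [Finset.map_add_right_Icc]
    congr 1 <;> omega
  rw [hmap, Finset.prod_map]
  refine Finset.prod_congr rfl fun i hi => ?_
  rw [Finset.mem_Icc] at hi
  have hemb : (addRightEmbedding r) i = i + r := rfl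
  have hu : (σ * t ^ ((((N-r) : ℕ) : ℤ) - (i:ℤ))) = σ * t ^ ((N:ℤ) - (((addRightEmbedding r) i : ℕ):ℤ)) := by
    rw [hemb]
    congr 2
    have : ((N - r : ℕ) : ℤ) = (N : ℤ) - r := by omega
    rw [this]
    push_cast
    ring
  rw [hu]

lemma wfun_eq (σ t : Rˣ) (N i : ℕ) :
    ((σ * t ^ ((N:ℤ) - (i:ℤ)))⁻¹ : Rˣ) = σ⁻¹ * t ^ ((i:ℤ) - (N:ℤ)) := by
  rw [mul_inv, ← zpow_neg, neg_sub]

lemma div2_eq (x a : ℤ) (h : x * (x+1) = a + a) : x * (x+1) / 2 = a := by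
  rw [h, show a + a = 2 * a by ring, Int.mul_ediv_cancel_left a (by norm_num)]

lemma unit_mul (σ t : Rˣ) (N m r : ℕ) (hrm : r ≤ m) (hmN : m ≤ N) :
    (σ ^ (m-r) * t ^ ((((m-r):ℕ):ℤ) * (((N-r):ℕ):ℤ)
        - ((((m-r):ℕ):ℤ) * ((((m-r):ℕ):ℤ) + 1))/2))
      * (σ ^ r * t ^ ((r:ℤ) * (N:ℤ) - ((r:ℤ) * ((r:ℤ) + 1))/2))
    = σ ^ m * t ^ ((m:ℤ) * (N:ℤ) - ((m:ℤ) * ((m:ℤ) + 1))/2) := by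
  have hσ : σ ^ (m-r) * σ ^ r = σ ^ m := by
    rw [← pow_add]
    congr 1
    omega
  rw [mul_mul_mul_comm, hσ, ← zpow_add]
  congr 1
  congr 1
  have hA : (((m-r):ℕ):ℤ) = (m:ℤ) - r := by omega
  have hB : (((N-r):ℕ):ℤ) = (N:ℤ) - r := by omega
  rw [hA, hB]
  obtain ⟨a1, ha1⟩ := Int.even_mul_succ_self ((m:ℤ) - r)
  obtain ⟨a2, ha2⟩ := Int.even_mul_succ_self (r:ℤ)
  obtain ⟨a3, ha3⟩ := Int.even_mul_succ_self (m:ℤ)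
  rw [div2_eq _ _ ha1, div2_eq _ _ ha2, div2_eq _ _ ha3]
  have h2 : (2:ℤ) * (((m:ℤ) - r) * ((N:ℤ) - r) - a1 + ((r:ℤ) * N - a2))
      = 2 * ((m:ℤ) * N - a3) := by
    linear_combination ha1 + ha2 - ha3
  exact mul_left_cancel₀ (by norm_num : (2:ℤ) ≠ 0) h2

lemma fEigen_eq (N : ℕ) (σ t : Rˣ) (s : ℕ → Rˣ) (r : ℕ) :
    fEigen N σ t s r
      = ((σ ^ r * t ^ ((r:ℤ) * (N:ℤ) - ((r:ℤ) * ((r:ℤ) + 1))/2) : Rˣ) : R)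
        * gg N (fun i => (s i : R) + (((s i)⁻¹ : Rˣ) : R))
            (fun i => ((σ * t ^ ((N : ℤ) - (i : ℤ)) : Rˣ) : R) +
              ((σ⁻¹ * t ^ ((i : ℤ) - (N : ℤ)) : Rˣ) : R)) r r := by
  rcases Nat.eq_zero_or_pos r with rfl | hr
  · rw [fEigen, if_pos rfl, gg_zero]
    norm_num
  · rw [fEigen, if_neg (by omega), gg]

end Aux

/-- The identity between the eigenvalues of the Koornwinder–Macdonald operators and those
of van Diejen's operators: for every `1 ≤ m ≤ N`,
`d_m = ∑_{j=0}^m d^{(N-m+j)}_j · f_{m-j}`. -/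
theorem eigenvalue_identity {R : Type*} [CommRing R] (N : ℕ) (hN : 1 ≤ N)
    (σ t : Rˣ) (s : ℕ → Rˣ) (m : ℕ) (hm1 : 1 ≤ m) (hmN : m ≤ N) :
    dEigen N σ t s m =
      ∑ j ∈ Finset.range (m + 1), dEigen0 σ t (N - m + j) j * fEigen N σ t s (m - j) := by
  classical
  set v : ℕ → R := fun i => (s i : R) + (((s i)⁻¹ : Rˣ) : R) with hv
  set w : ℕ → R := fun i => ((σ * t ^ ((N : ℤ) - (i : ℤ)) : Rˣ) : R) +
      ((σ⁻¹ * t ^ ((i : ℤ) - (N : ℤ)) : Rˣ) : R) with hw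
  have core : ehat m (Finset.Icc 1 N) s
      = ∑ r ∈ Finset.range (m+1), gg N v w r r
          * ehat (m-r) (Finset.Icc (r+1) N) (fun i => σ * t ^ ((N:ℤ) - (i:ℤ))) := by
    have h1 : ehat m (Finset.Icc 1 N) s
        = (∏ i ∈ Finset.Icc 1 N,
            ((1:Polynomial R) + Polynomial.C (v i) * Polynomial.X + Polynomial.X^2)).coeff m :=
      (coeff_quadprod (Finset.Icc 1 N) s m).symm
    rw [h1, star N v w, coeff_SS N v w m hmN]
    refine Finset.sum_congr rfl fun r hr => ?_
    congr 1
    rw [AA]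
    have hfac : ∀ i ∈ Finset.Icc (r+1) N,
        ((1:Polynomial R) + Polynomial.C (w i) * Polynomial.X + Polynomial.X^2)
          = 1 + Polynomial.C (((σ * t ^ ((N:ℤ) - (i:ℤ)) : Rˣ) : R)
              + ((((σ * t ^ ((N:ℤ) - (i:ℤ)) : Rˣ))⁻¹ : Rˣ) : R)) * Polynomial.X
            + Polynomial.X^2 := by
      intro i _
      rw [wfun_eq]
    rw [Finset.prod_congr rfl hfac,
      coeff_quadprod (Finset.Icc (r+1) N) (fun i => σ * t ^ ((N:ℤ) - (i:ℤ))) (m-r)]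
  rw [← Finset.sum_range_reflect
    (fun j => dEigen0 σ t (N - m + j) j * fEigen N σ t s (m - j)) (m+1)]
  rw [dEigen]
  have hterm : ∀ r ∈ Finset.range (m+1),
      dEigen0 σ t (N - m + (m + 1 - 1 - r)) (m + 1 - 1 - r) * fEigen N σ t s (m - (m + 1 - 1 - r))
        = ((σ ^ m * t ^ ((m : ℤ) * (N : ℤ) - ((m : ℤ) * ((m : ℤ) + 1)) / 2) : Rˣ) : R)
          * (gg N v w r r
              * ehat (m-r) (Finset.Icc (r+1) N) (fun i => σ * t ^ ((N:ℤ) - (i:ℤ)))) := by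
    intro r hr
    rw [Finset.mem_range] at hr
    have e1 : m + 1 - 1 - r = m - r := by omega
    have e2 : N - m + (m - r) = N - r := by omega
    have e3 : m - (m - r) = r := by omega
    rw [e1, e2, e3, dEigen0, fEigen_eq, ehat_shift σ t N r (m-r) (by omega)]
    rw [← hv, ← hw]
    have hre : ∀ (u1 u2 : Rˣ) (x y : R), ((u1 : R) * x) * ((u2 : R) * y)
        = ((u1 * u2 : Rˣ) : R) * (y * x) := by
      intro u1 u2 x y
      rw [Units.val_mul]
      ring
    rw [hre, unit_mul σ t N m r (by omega) hmN]
  rw [Finset.sum_congr rfl hterm, ← Finset.mul_sum, ← core]
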